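/- Let k, 𝒪_k, ϖ be as usual (complete non-archimedean field, 0 < |ϖ| < 1), let R = k[T,T⁻¹,Z]/(Z²) and R₀ the 𝒪_k-submodule with basis ϖ^{|n|}Tⁿ and ϖ^{-|n|}TⁿZ (n ∈ ℤ). Then for every n ≥ 0: ϖ⁻ⁿZ ∈ R₀[T] and ϖ⁻ⁿZ ∈ R₀[T⁻¹], but ϖ⁻¹Z ∉ R₀. Consequently the image of Z is zero in the completions of R with respect to R₀[T] and R₀[T⁻¹], but nonzero in the completion of R with respect to R₀. -/

import Mathlib

open Pointwise

/-- The valuation ring `𝒪_k = {c : k | ‖c‖ ≤ 1}` of a non-archimedean normed field. -/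
def valuationSubring (k : Type*) [NormedField k] [IsUltrametricDist k] : Subring k where
  carrier := {c | ‖c‖ ≤ 1}
  one_mem' := by simp
  zero_mem' := by simp
  neg_mem' := by simp
  mul_mem' := by
    intro a b ha hb
    simp only [Set.mem_setOf_eq] at *
    calc ‖a * b‖ = ‖a‖ * ‖b‖ := norm_mul a b
      _ ≤ 1 * 1 := mul_le_mul ha hb (norm_nonneg b) zero_le_one
      _ = 1 := one_mul 1
  add_mem' := by
    intro a b ha hb
    simp only [Set.mem_setOf_eq] at *
    exact le_trans (IsUltrametricDist.norm_add_le_max a b) (max_le ha hb)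


open TrivSqZeroExt LaurentPolynomial


-- the "coefficient of T^0 in ε-part is in 𝒪_k" submodule
def coefSub (k : Type*) [NormedField k] [IsUltrametricDist k] :
    Submodule (valuationSubring k) (DualNumber (LaurentPolynomial k)) where
  carrier := {x | ‖x.snd.coeff 0‖ ≤ 1}
  zero_mem' := by simp
  add_mem' := by
    intro a b ha hb
    simp only [Set.mem_setOf_eq] at *
    refine le_trans ?_ (max_le ha hb)
    have : (a + b).snd.coeff 0 = a.snd.coeff 0 + b.snd.coeff 0 := by rw [snd_add]; rfl
    rw [this]
    exact IsUltrametricDist.norm_add_le_max _ _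
  smul_mem' := by
    intro c x hx
    simp only [Set.mem_setOf_eq] at *
    have : ((c • x).snd).coeff 0 = (c : k) * x.snd.coeff 0 := by
      rw [snd_smul]
      show ((c : k) • x.snd).coeff 0 = _
      rw [AddMonoidAlgebra.coeff_smul_apply, smul_eq_mul]
    rw [this, norm_mul]
    exact mul_le_one₀ c.2 (norm_nonneg _) hx

set_option synthInstance.maxHeartbeats 400000 in
open TrivSqZeroExt LaurentPolynomial in
private lemma genA (k : Type*) [NontriviallyNormedField k] (ϖ : k) (n : ℕ) :
    (inl (T 1) : DualNumber (LaurentPolynomial k)) ^ n *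
      (((ϖ⁻¹) ^ ((-(n:ℤ)).natAbs)) • inr (T (-(n:ℤ)))) =
      (ϖ⁻¹) ^ n • inr (M := LaurentPolynomial k) 1 := by
  rw [inl_pow, T_pow, mul_smul_comm (ϖ⁻¹ ^ ((-(n:ℤ)).natAbs)), inl_mul_inr,
    Int.natAbs_neg, Int.natAbs_natCast, smul_eq_mul, ← T_add]
  norm_num

set_option synthInstance.maxHeartbeats 400000 in
open TrivSqZeroExt LaurentPolynomial in
private lemma genB (k : Type*) [NontriviallyNormedField k] (ϖ : k) (n : ℕ) :
    (inl (T (-1)) : DualNumber (LaurentPolynomial k)) ^ n *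
      (((ϖ⁻¹) ^ ((n:ℤ)).natAbs) • inr (T (n:ℤ))) =
      (ϖ⁻¹) ^ n • inr (M := LaurentPolynomial k) 1 := by
  rw [inl_pow, T_pow, mul_smul_comm (ϖ⁻¹ ^ ((n:ℤ)).natAbs), inl_mul_inr,
    Int.natAbs_natCast, smul_eq_mul, ← T_add]
  norm_num

open TrivSqZeroExt LaurentPolynomial in
theorem rost_example_not_sheaf
    (k : Type*) [NontriviallyNormedField k] [IsUltrametricDist k] [CompleteSpace k]
    (ϖ : k) (hϖ0 : 0 < ‖ϖ‖) (hϖ1 : ‖ϖ‖ < 1)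
    (R₀ : Submodule (valuationSubring k) (DualNumber (LaurentPolynomial k)))
    (hR₀ : R₀ = Submodule.span (valuationSubring k)
      ((Set.range fun n : ℤ =>
          (ϖ ^ n.natAbs) • TrivSqZeroExt.inl (LaurentPolynomial.T n)) ∪
       (Set.range fun n : ℤ =>
          ((ϖ⁻¹) ^ n.natAbs) •
            TrivSqZeroExt.inr (M := LaurentPolynomial k) (LaurentPolynomial.T n))))
    (Z : DualNumber (LaurentPolynomial k))
    (hZ : Z = TrivSqZeroExt.inr (M := LaurentPolynomial k) 1)
    (A₀ B₀ : Subring (DualNumber (LaurentPolynomial k)))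
    (hA₀ : A₀ = Subring.closure
      ((R₀ : Set (DualNumber (LaurentPolynomial k))) ∪
        {TrivSqZeroExt.inl (LaurentPolynomial.T 1)}))
    (hB₀ : B₀ = Subring.closure
      ((R₀ : Set (DualNumber (LaurentPolynomial k))) ∪
        {TrivSqZeroExt.inl (LaurentPolynomial.T (-1))})) :
    (∀ n : ℕ, (ϖ⁻¹) ^ n • Z ∈ A₀) ∧
    (∀ n : ℕ, (ϖ⁻¹) ^ n • Z ∈ B₀) ∧
    ϖ⁻¹ • Z ∉ R₀ ∧
    Z ∈ ⋂ n : ℕ, ϖ ^ n • (A₀ : Set (DualNumber (LaurentPolynomial k))) ∧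
    Z ∈ ⋂ n : ℕ, ϖ ^ n • (B₀ : Set (DualNumber (LaurentPolynomial k))) ∧
    Z ∉ ⋂ n : ℕ, ϖ ^ n • (R₀ : Set (DualNumber (LaurentPolynomial k))) := by
  have hπ : ϖ ≠ 0 := fun h => by simp [h] at hϖ0
  -- part 1
  have hA : ∀ n : ℕ, (ϖ⁻¹) ^ n • Z ∈ A₀ := by
    intro n
    have hg : ((ϖ⁻¹) ^ ((-(n:ℤ)).natAbs)) • inr (M := LaurentPolynomial k) (T (-(n:ℤ))) ∈ R₀ := by
      rw [hR₀]
      exact Submodule.subset_span (Or.inr ⟨-(n:ℤ), rfl⟩)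
    have hg' : ((ϖ⁻¹) ^ ((-(n:ℤ)).natAbs)) • inr (M := LaurentPolynomial k) (T (-(n:ℤ))) ∈ A₀ := by
      rw [hA₀]; exact Subring.subset_closure (Or.inl hg)
    have ht : (inl (T 1) : DualNumber (LaurentPolynomial k)) ∈ A₀ := by
      rw [hA₀]; exact Subring.subset_closure (Or.inr rfl)
    have := A₀.mul_mem (A₀.pow_mem ht n) hg'
    rwa [genA k ϖ n, ← hZ] at this
  -- part 2
  have hB : ∀ n : ℕ, (ϖ⁻¹) ^ n • Z ∈ B₀ := by
    intro n
    have hg : ((ϖ⁻¹) ^ ((n:ℤ)).natAbs) • inr (M := LaurentPolynomial k) (T (n:ℤ)) ∈ R₀ := by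
      rw [hR₀]
      exact Submodule.subset_span (Or.inr ⟨(n:ℤ), rfl⟩)
    have hg' : ((ϖ⁻¹) ^ ((n:ℤ)).natAbs) • inr (M := LaurentPolynomial k) (T (n:ℤ)) ∈ B₀ := by
      rw [hB₀]; exact Subring.subset_closure (Or.inl hg)
    have ht : (inl (T (-1)) : DualNumber (LaurentPolynomial k)) ∈ B₀ := by
      rw [hB₀]; exact Subring.subset_closure (Or.inr rfl)
    have := B₀.mul_mem (B₀.pow_mem ht n) hg'
    rwa [genB k ϖ n, ← hZ] at this
  -- part 3
  have hR₀le : R₀ ≤ coefSub k := by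
    rw [hR₀]
    apply Submodule.span_le.2
    rintro x (⟨n, rfl⟩ | ⟨n, rfl⟩)
    · show ‖((ϖ ^ n.natAbs •
          inl (T n) : DualNumber (LaurentPolynomial k)).snd).coeff 0‖ ≤ 1
      rw [snd_smul, snd_inl, smul_zero]
      simp
    · show ‖(((ϖ⁻¹) ^ n.natAbs •
          inr (M := LaurentPolynomial k) (T n) : DualNumber (LaurentPolynomial k)).snd).coeff 0‖ ≤ 1
      rw [snd_smul, snd_inr]
      rcases eq_or_ne n 0 with h | h
      · subst h
        have : ((ϖ⁻¹ ^ (0:ℤ).natAbs) • (T 0 : LaurentPolynomial k)).coeff 0 = 1 := by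
          rw [AddMonoidAlgebra.coeff_smul_apply, T_apply, if_pos rfl]
          simp
        rw [this]; simp
      · have : ((ϖ⁻¹ ^ n.natAbs) • (T n : LaurentPolynomial k)).coeff 0 = 0 := by
          rw [AddMonoidAlgebra.coeff_smul_apply]
          rw [T_apply, if_neg h]
          simp
        rw [this]; simp
  have h3 : ϖ⁻¹ • Z ∉ R₀ := by
    intro hmem
    have := hR₀le hmem
    have hval : ‖((ϖ⁻¹ • Z).snd).coeff 0‖ ≤ 1 := this
    rw [hZ, snd_smul, snd_inr] at hval
    have : ((ϖ⁻¹ • (1 : LaurentPolynomial k))).coeff 0 = ϖ⁻¹ := by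
      rw [AddMonoidAlgebra.coeff_smul_apply]
      rw [← T_zero, T_apply, if_pos rfl]
      simp
    rw [this, norm_inv] at hval
    have h1 : 1 < ‖ϖ‖⁻¹ := (one_lt_inv₀ hϖ0).2 hϖ1
    linarith
  refine ⟨hA, hB, h3, ?_, ?_, ?_⟩
  · refine Set.mem_iInter.2 fun n => ⟨(ϖ⁻¹) ^ n • Z, hA n, ?_⟩
    show ϖ ^ n • ((ϖ⁻¹) ^ n • Z) = Z
    rw [smul_smul, ← mul_pow, mul_inv_cancel₀ hπ, one_pow, one_smul]
  · refine Set.mem_iInter.2 fun n => ⟨(ϖ⁻¹) ^ n • Z, hB n, ?_⟩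
    show ϖ ^ n • ((ϖ⁻¹) ^ n • Z) = Z
    rw [smul_smul, ← mul_pow, mul_inv_cancel₀ hπ, one_pow, one_smul]
  · intro h
    obtain ⟨x, hx, hxe⟩ := Set.mem_iInter.1 h 1
    apply h3
    have : ϖ⁻¹ • Z = x := by
      show ϖ⁻¹ • Z = x
      have hxe2 : ϖ ^ 1 • x = Z := hxe
      rw [← hxe2, pow_one, smul_smul, inv_mul_cancel₀ hπ, one_smul]
    rw [this]; exact hx
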